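/- Fix positive integers m and n with n ≥ 2, and let δ = (m(n−1)−1, m(n−2)−1, …, m·1−1, 0) ∈ ℝ^n. A function d : {1,…,n} → ℕ is a break divisor on K_n^m if and only if the point (d(1),…,d(n)) ∈ ℝ^n lies in the convex hull of the set of all vectors obtained from δ by permuting its coordinates. -/

import Mathlib

/-- The genus of the complete multigraph `K_n^m`, namely `m·n·(n−1)/2 − n + 1`. -/
def genusZ (m n : ℕ) : ℤ := (m : ℤ) * n * ((n : ℤ) - 1) / 2 - n + 1

/-- A break divisor on the complete multigraph `K_n^m`. -/
def IsBreakDivisor (m n : ℕ) (d : Fin n → ℕ) : Prop :=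
  (∑ i, (d i : ℤ)) = genusZ m n ∧
  ∀ S : Finset (Fin n), S.Nonempty →
    (m : ℤ) * S.card * ((S.card : ℤ) - 1) / 2 - S.card + 1 ≤ ∑ i ∈ S, (d i : ℤ)

/-- The vector `δ = (m(n−1)−1, m(n−2)−1, …, m·1−1, 0) ∈ ℝ^n` (0-indexed:
`δ_i = m(n−1−i) − 1` for `i < n−1`, and `δ_{n−1} = 0`). -/
def deltaVec (m n : ℕ) : Fin n → ℝ :=
  fun i => if (i : ℕ) = n - 1 then 0 else (m : ℝ) * ((n : ℝ) - 1 - (i : ℕ)) - 1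

open Finset

variable {n : ℕ}

/-- prefix sum of first `p` coordinates. -/
def pref (n : ℕ) (z : Fin n → ℤ) (p : ℕ) : ℤ := ∑ i : Fin n, if (i : ℕ) < p then z i else 0

lemma pref_zero (z : Fin n → ℤ) : pref n z 0 = 0 := by simp [pref]

lemma pref_succ (z : Fin n → ℤ) {p : ℕ} (hp : p < n) :
    pref n z (p + 1) = pref n z p + z ⟨p, hp⟩ := by
  have key : ∀ i : Fin n, (if (i : ℕ) < p + 1 then z i else 0) =
      (if (i : ℕ) < p then z i else 0) + (if i = ⟨p, hp⟩ then z i else 0) := by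
    intro i
    rcases lt_trichotomy (i : ℕ) p with h | h | h
    · have : i ≠ ⟨p, hp⟩ := by intro e; rw [e] at h; simp at h
      simp [h, Nat.lt_succ_of_lt h, this]
    · have : i = ⟨p, hp⟩ := Fin.ext h
      simp [this]
    · have h1 : ¬ (i : ℕ) < p + 1 := by omega
      have h2 : ¬ (i : ℕ) < p := by omega
      have : i ≠ ⟨p, hp⟩ := by intro e; rw [e] at h; simp at h
      simp [h1, h2, this]
  rw [pref]
  simp only [key]
  rw [Finset.sum_add_distrib, Finset.sum_ite_eq' univ (⟨p, hp⟩ : Fin n) z]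
  simp [pref]

lemma pref_top (z : Fin n → ℤ) : pref n z n = ∑ i, z i := by
  simp [pref, Fin.is_lt]

lemma sum_filter_lt (z : Fin n → ℤ) (p : ℕ) :
    ∑ i ∈ univ.filter (fun i : Fin n => (i : ℕ) < p), z i = pref n z p := by
  rw [pref]; exact Finset.sum_filter _ _

lemma card_filter_lt {p : ℕ} (hpn : p ≤ n) :
    (univ.filter (fun i : Fin n => (i : ℕ) < p)).card = p := by
  induction p with
  | zero => simp
  | succ q ih =>
    have hq : q < n := hpn
    have : (univ.filter (fun i : Fin n => (i : ℕ) < q + 1)) =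
        insert (⟨q, hq⟩ : Fin n) (univ.filter (fun i : Fin n => (i : ℕ) < q)) := by
      ext i
      simp only [mem_filter, mem_univ, true_and, mem_insert]
      constructor
      · intro h
        rcases Nat.lt_succ_iff_lt_or_eq.1 h with h | h
        · exact Or.inr h
        · exact Or.inl (Fin.ext h)
      · rintro (rfl | h)
        · simp
        · omega
    rw [this, card_insert_of_notMem (by simp), ih (le_of_lt hq)]

/-- Key: for antitone `z`, any subset sum is at most the prefix sum of the same size. -/
lemma sum_le_pref {z : Fin n → ℤ} (hz : Antitone z) (S : Finset (Fin n)) :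
    ∑ i ∈ S, z i ≤ pref n z S.card := by
  suffices H : ∀ p (S : Finset (Fin n)), S.card = p → ∑ i ∈ S, z i ≤ pref n z p by
    exact H S.card S rfl
  intro p
  induction p with
  | zero =>
    intro S hcard
    rw [Finset.card_eq_zero] at hcard
    simp [hcard, pref_zero]
  | succ p ih =>
    intro S hcard
    have hSne : S.Nonempty := by
      rw [← Finset.card_pos, hcard]; omega
    set M := S.max' hSne with hM
    have hMS : M ∈ S := S.max'_mem hSne
    have hcard' : (S.erase M).card = p := by
      rw [Finset.card_erase_of_mem hMS, hcard]; omega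
    have hpn : p + 1 ≤ n := by
      rw [← hcard]; simpa using Finset.card_le_univ S
    have hpltn : p < n := hpn
    -- p ≤ M.val
    have hpM : p ≤ (M : ℕ) := by
      have hsub : S ⊆ Finset.Iic M := fun i hi => Finset.mem_Iic.2 (S.le_max' i hi)
      have := Finset.card_le_card hsub
      rw [hcard, Fin.card_Iic] at this
      omega
    have hzM : z M ≤ z ⟨p, hpltn⟩ := hz (by
      show (⟨p, hpltn⟩ : Fin n) ≤ M
      exact Fin.mk_le_of_le_val hpM)
    calc ∑ i ∈ S, z i = ∑ i ∈ S.erase M, z i + z M := (Finset.sum_erase_add S z hMS).symm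
      _ ≤ pref n z p + z ⟨p, hpltn⟩ := add_le_add (ih _ hcard') hzM
      _ = pref n z (p + 1) := (pref_succ z hpltn).symm

/-- permuted prefix sums are dominated by sorted prefix sums -/
lemma pref_comp_le {w : Fin n → ℤ} (hw : Antitone w) (ρ : Equiv.Perm (Fin n)) (p : ℕ)
    (hpn : p ≤ n) : pref n (w ∘ ρ) p ≤ pref n w p := by
  have h1 : pref n (w ∘ ρ) p = ∑ i ∈ (univ.filter (fun i : Fin n => (i : ℕ) < p)).image ρ, w i := by
    rw [Finset.sum_image (fun x _ y _ h => ρ.injective h), ← sum_filter_lt (w ∘ ρ) p]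
    rfl
  have h2 : ((univ.filter (fun i : Fin n => (i : ℕ) < p)).image ρ).card = p := by
    rw [Finset.card_image_of_injective _ ρ.injective, card_filter_lt hpn]
  rw [h1]
  calc ∑ i ∈ (univ.filter (fun i : Fin n => (i : ℕ) < p)).image ρ, w i
      ≤ pref n w ((univ.filter (fun i : Fin n => (i : ℕ) < p)).image ρ).card := sum_le_pref hw _
    _ = pref n w p := by rw [h2]

def fZ (m k : ℕ) : ℤ := (m : ℤ) * k * ((k : ℤ) - 1) / 2 - k + 1

def deltaZ (m n : ℕ) : Fin n → ℤ :=
  fun i => if (i : ℕ) = n - 1 then 0 else (m : ℤ) * ((n : ℤ) - 1 - (i : ℕ)) - 1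

lemma two_fZ (m k : ℕ) : 2 * fZ m k = (m : ℤ) * k * ((k : ℤ) - 1) - 2 * k + 2 := by
  have hdvd : (2 : ℤ) ∣ (m : ℤ) * k * ((k : ℤ) - 1) := by
    have he : Even (((k : ℤ) - 1) * ((k : ℤ) - 1 + 1)) := Int.even_mul_succ_self _
    have h2 : (2 : ℤ) ∣ ((k : ℤ) - 1) * (k : ℤ) := by
      have := he.two_dvd
      simpa using this
    have : (m : ℤ) * k * ((k : ℤ) - 1) = (m : ℤ) * (((k : ℤ) - 1) * k) := by ring
    rw [this]
    exact Dvd.dvd.mul_left h2 _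
  obtain ⟨c, hc⟩ := hdvd
  rw [fZ, hc]
  rw [Int.mul_ediv_cancel_left c (by norm_num)]
  ring

lemma two_pref_delta (m : ℕ) {p : ℕ} (hp : p ≤ n - 1) :
    2 * pref n (deltaZ m n) p = (m : ℤ) * p * (2 * (n : ℤ) - 1 - p) - 2 * p := by
  induction p with
  | zero => simp [pref_zero]
  | succ q ih =>
    have hq : q ≤ n - 1 := by omega
    have hqn : q < n := by omega
    have hq1 : q < n - 1 := by omega
    have hval : deltaZ m n ⟨q, hqn⟩ = (m : ℤ) * ((n : ℤ) - 1 - q) - 1 := by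
      simp only [deltaZ, Fin.val_mk]
      rw [if_neg (by omega)]
    rw [pref_succ _ hqn, hval]
    have IH := ih hq
    have hcast : ((q : ℕ) : ℤ) + 1 = ((q + 1 : ℕ) : ℤ) := by push_cast; ring
    push_cast
    push_cast at IH
    nlinarith [IH]

lemma two_sum_delta (m : ℕ) (hn : 1 ≤ n) :
    2 * (∑ i, deltaZ m n i) = 2 * fZ m n := by
  have h1 : n = (n - 1) + 1 := by omega
  have hlt : n - 1 < n := by omega
  have h2' : pref n (deltaZ m n) n = pref n (deltaZ m n) (n - 1 + 1) := by
    rw [Nat.sub_add_cancel hn]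
  have h2 : pref n (deltaZ m n) n = pref n (deltaZ m n) (n - 1) + deltaZ m n ⟨n - 1, hlt⟩ :=
    h2'.trans (pref_succ _ hlt)
  have h3 : deltaZ m n ⟨n - 1, hlt⟩ = 0 := by simp [deltaZ]
  have h4 := two_pref_delta (n := n) m (le_refl (n - 1))
  rw [← pref_top, h2, h3, add_zero]
  rw [two_fZ]
  have hc : ((n - 1 : ℕ) : ℤ) = (n : ℤ) - 1 := by omega
  rw [hc] at h4
  nlinarith [h4]

lemma sum_delta (m : ℕ) (hn : 1 ≤ n) : (∑ i, deltaZ m n i) = fZ m n := by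
  have := two_sum_delta (n := n) m hn; omega

lemma pref_delta_eq (m : ℕ) {p : ℕ} (hp1 : 1 ≤ p) (hpn : p ≤ n) :
    pref n (deltaZ m n) (n - p) = fZ m n - fZ m p := by
  have h1 : n - p ≤ n - 1 := by omega
  have h2 := two_pref_delta (n := n) m h1
  have h3 := two_fZ m n
  have h4 := two_fZ m p
  have hc : ((n - p : ℕ) : ℤ) = (n : ℤ) - p := by omega
  rw [hc] at h2
  nlinarith [h2, h3, h4]

lemma deltaZ_antitone (m : ℕ) (hm : 1 ≤ m) : Antitone (deltaZ m n) := by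
  intro i j hij
  have hmZ : (1 : ℤ) ≤ (m : ℤ) := by exact_mod_cast hm
  by_cases hj : (j : ℕ) = n - 1
  · rw [deltaZ, if_pos hj]
    by_cases hi : (i : ℕ) = n - 1
    · rw [deltaZ, if_pos hi]
    · rw [deltaZ, if_neg hi]
      have hi2 : (i : ℕ) < n - 1 := by
        have := i.isLt; omega
      have : (1 : ℤ) ≤ (n : ℤ) - 1 - (i : ℕ) := by
        have := i.isLt; omega
      nlinarith
  · have hjlt : (j : ℕ) < n - 1 := by have := j.isLt; omega
    have hilt : (i : ℕ) < n - 1 := by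
      have : (i : ℕ) ≤ (j : ℕ) := hij
      omega
    rw [deltaZ, if_neg (by omega), deltaZ, if_neg (by omega)]
    have hij' : ((i : ℕ) : ℤ) ≤ ((j : ℕ) : ℤ) := by exact_mod_cast hij
    nlinarith

lemma maj_mem_hull (n : ℕ) :
    ∀ N (y : Fin n → ℤ), (∑ i, (y i)^2).toNat < N → Antitone y →
    ∀ x : Fin n → ℤ, Antitone x → (∑ i, x i = ∑ i, y i) →
    (∀ S : Finset (Fin n), ∑ i ∈ S, x i ≤ pref n y S.card) →
    (fun i => (x i : ℝ)) ∈ convexHull ℝ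
      {v : Fin n → ℝ | ∃ σ : Equiv.Perm (Fin n), v = (fun i => (y i : ℝ)) ∘ σ} := by
  intro N
  induction N with
  | zero => intro y hy; exact absurd hy (Nat.not_lt_zero _)
  | succ N IH =>
    intro y hyN hy x hx hsum hmaj
    by_cases hxy : ∀ i, x i = y i
    · refine subset_convexHull ℝ _ ⟨1, funext fun i => ?_⟩
      simp [hxy i]
    · push_neg at hxy
      -- minimal index where they differ
      have hT₁ : (univ.filter (fun i => x i ≠ y i)).Nonempty := by
        obtain ⟨i, hi⟩ := hxy
        exact ⟨i, by simp [hi]⟩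
      set j := (univ.filter (fun i => x i ≠ y i)).min' hT₁ with hjdef
      have hj_ne : x j ≠ y j := by
        have := Finset.min'_mem _ hT₁
        simpa using this
      have hj_min : ∀ i, i < j → x i = y i := by
        intro i hij
        by_contra hne
        have : j ≤ i := Finset.min'_le _ i (by simp [hne])
        exact absurd hij (not_lt.2 this)
      -- x j < y j
      have hxjyj : x j < y j := by
        have hjn : (j : ℕ) + 1 ≤ n := j.isLt
        have h1 := hmaj (univ.filter (fun i : Fin n => (i : ℕ) < (j : ℕ) + 1))
        rw [sum_filter_lt, card_filter_lt hjn] at h1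
        have hprefeq : pref n x (j : ℕ) = pref n y (j : ℕ) := by
          apply Finset.sum_congr rfl
          intro i _
          by_cases hi : (i : ℕ) < (j : ℕ)
          · rw [if_pos hi, if_pos hi, hj_min i (Fin.lt_def.2 hi)]
          · rw [if_neg hi, if_neg hi]
        have e1 : pref n x ((j : ℕ) + 1) = pref n x (j : ℕ) + x j := by
          have := pref_succ x j.isLt
          simpa [Fin.eta] using this
        have e2 : pref n y ((j : ℕ) + 1) = pref n y (j : ℕ) + y j := by
          have := pref_succ y j.isLt
          simpa [Fin.eta] using this
        rw [e1, e2, hprefeq] at h1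
        have : x j ≤ y j := by omega
        exact lt_of_le_of_ne this hj_ne
      -- minimal index where x exceeds y
      have hT₂ : (univ.filter (fun i => y i < x i)).Nonempty := by
        by_contra hne
        rw [Finset.not_nonempty_iff_eq_empty] at hne
        have hall : ∀ i : Fin n, x i ≤ y i := by
          intro i
          by_contra h
          have : i ∈ univ.filter (fun i => y i < x i) := by simp; omega
          rw [hne] at this
          exact absurd this (Finset.notMem_empty i)
        have : ∑ i, x i < ∑ i, y i :=
          Finset.sum_lt_sum (fun i _ => hall i) ⟨j, Finset.mem_univ j, hxjyj⟩
        omega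
      set k := (univ.filter (fun i => y i < x i)).min' hT₂ with hkdef
      have hk : y k < x k := by
        have := Finset.min'_mem _ hT₂
        simpa using this
      have hk_min : ∀ i, i < k → x i ≤ y i := by
        intro i hik
        by_contra hne
        have : k ≤ i := Finset.min'_le _ i (by simp; omega)
        exact absurd hik (not_lt.2 this)
      have hjk : j < k := by
        rcases lt_trichotomy j k with h | h | h
        · exact h
        · exfalso; rw [h] at hxjyj; omega
        · exfalso; have := hj_min k h; omega
      have hjkne : j ≠ k := ne_of_lt hjk
      set t : ℤ := min (y j - x j) (x k - y k) with htdef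
      have ht1 : 1 ≤ t := by
        rw [htdef]; omega
      have ht2 : t ≤ y j - x j := min_le_left _ _
      have ht3 : t ≤ x k - y k := min_le_right _ _
      have hxkj : x k ≤ x j := hx (le_of_lt hjk)
      have hykj : y k < y j := by omega
      set y' : Fin n → ℤ :=
        fun i => y i + (if i = k then t else 0) - (if i = j then t else 0) with hy'def
      have hy'j : y' j = y j - t := by simp [hy'def, hjkne]
      have hy'k : y' k = y k + t := by simp [hy'def, hjkne.symm]
      have hy'other : ∀ i, i ≠ j → i ≠ k → y' i = y i := by
        intro i h1 h2; simp [hy'def, h1, h2]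
      have hsum' : ∑ i, y' i = ∑ i, y i := by
        simp only [hy'def]
        rw [Finset.sum_sub_distrib, Finset.sum_add_distrib]
        rw [Finset.sum_ite_eq' univ k (fun _ => t), Finset.sum_ite_eq' univ j (fun _ => t)]
        simp
      -- square sum decreases
      have hsq : ∑ i, (y' i)^2 ≤ (∑ i, (y i)^2) - 2 := by
        have key : ∀ i, (y' i)^2 = (y i)^2 + (if i = k then 2*(y k)*t + t^2 else 0)
            + (if i = j then t^2 - 2*(y j)*t else 0) := by
          intro i
          by_cases h1 : i = j
          · subst h1
            rw [if_neg hjkne, if_pos rfl, hy'j]; ring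
          · by_cases h2 : i = k
            · subst h2
              rw [if_pos rfl, if_neg (by exact fun h => h1 h), hy'k]; ring
            · rw [if_neg h2, if_neg h1, hy'other i h1 h2]; ring
        rw [Finset.sum_congr rfl (fun i _ => key i)]
        rw [Finset.sum_add_distrib, Finset.sum_add_distrib]
        rw [Finset.sum_ite_eq' univ k, Finset.sum_ite_eq' univ j]
        simp only [Finset.mem_univ, if_pos]
        nlinarith [ht1, ht2, ht3, hxkj, hk]
      -- pref x ≤ pref y'
      have hplain : ∀ p, p ≤ n → pref n x p ≤ pref n y p := by
        intro p hpn
        have := hmaj (univ.filter (fun i : Fin n => (i : ℕ) < p))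
        rwa [sum_filter_lt, card_filter_lt hpn] at this
      have hshift : ∀ p, pref n y' p = pref n y p + (if (k : ℕ) < p then t else 0)
          - (if (j : ℕ) < p then t else 0) := by
        intro p
        have key : ∀ i : Fin n, (if (i : ℕ) < p then y' i else 0) =
            (if (i : ℕ) < p then y i else 0)
            + (if i = k then (if (i : ℕ) < p then t else 0) else 0)
            - (if i = j then (if (i : ℕ) < p then t else 0) else 0) := by
          intro i
          by_cases h1 : i = j
          · subst h1
            rw [if_neg hjkne, hy'j]
            by_cases h : ((j : Fin n) : ℕ) < p <;> simp [h]
          · by_cases h2 : i = k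
            · subst h2
              rw [if_pos rfl, if_neg h1, hy'k]
              by_cases h : ((k : Fin n) : ℕ) < p <;> simp [h]
            · rw [if_neg h1, if_neg h2, hy'other i h1 h2]
              ring
        rw [pref, Finset.sum_congr rfl (fun i _ => key i)]
        rw [Finset.sum_sub_distrib, Finset.sum_add_distrib]
        rw [Finset.sum_ite_eq' univ k, Finset.sum_ite_eq' univ j]
        simp only [Finset.mem_univ, if_pos]
        rfl
      have hmiddle : ∀ p, p ≤ n → (j : ℕ) < p → p ≤ (k : ℕ) →
          pref n x p + t ≤ pref n y p := by
        intro p hpn hjp hpk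
        have hdiff : pref n y p - pref n x p = ∑ i : Fin n, (if (i : ℕ) < p then y i - x i else 0) := by
          rw [pref, pref, ← Finset.sum_sub_distrib]
          apply Finset.sum_congr rfl
          intro i _
          by_cases h : (i : ℕ) < p <;> simp [h]
        have hnonneg : ∀ i : Fin n, i ∈ univ → (0 : ℤ) ≤ (if (i : ℕ) < p then y i - x i else 0) := by
          intro i _
          by_cases h : (i : ℕ) < p
          · rw [if_pos h]
            have hik : i < k := Fin.lt_def.2 (by omega)
            have := hk_min i hik
            omega
          · rw [if_neg h]
        have hjterm : (if ((j : Fin n) : ℕ) < p then y j - x j else 0) ≤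
            ∑ i : Fin n, (if (i : ℕ) < p then y i - x i else 0) :=
          Finset.single_le_sum hnonneg (Finset.mem_univ j)
        rw [if_pos hjp] at hjterm
        omega
      have hxy' : ∀ p, p ≤ n → pref n x p ≤ pref n y' p := by
        intro p hpn
        rcases le_or_gt p (j : ℕ) with h | h
        · rw [hshift p, if_neg (by omega), if_neg (by omega)]
          have := hplain p hpn
          omega
        · rcases le_or_gt p (k : ℕ) with h2 | h2
          · rw [hshift p, if_neg (by omega), if_pos h]
            have := hmiddle p hpn h h2
            omega
          · rw [hshift p, if_pos h2, if_pos (by omega)]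
            have := hplain p hpn
            omega
      -- sort y'
      set σ' := Tuple.sort (fun i => - y' i) with hσ'def
      set w : Fin n → ℤ := y' ∘ σ' with hwdef
      have hw_anti : Antitone w := by
        have hmono := Tuple.monotone_sort (fun i => - y' i)
        intro a b hab
        have h2 : - y' (σ' a) ≤ - y' (σ' b) := hmono hab
        show y' (σ' b) ≤ y' (σ' a)
        linarith
      have hw_sum : ∑ i, w i = ∑ i, y i := by
        rw [hwdef]
        have : ∑ i, y' (σ' i) = ∑ i, y' i := Equiv.sum_comp σ' y'
        simpa [Function.comp] using this.trans hsum'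
      have hw_sq : ∑ i, (w i)^2 = ∑ i, (y' i)^2 := by
        have : ∑ i, (fun i => (y' i)^2) (σ' i) = ∑ i, (y' i)^2 :=
          Equiv.sum_comp σ' (fun i => (y' i)^2)
        simpa [hwdef, Function.comp] using this
      have hw_meas : (∑ i, (w i)^2).toNat < N := by
        have h0 : (0 : ℤ) ≤ ∑ i, (y' i)^2 := Finset.sum_nonneg (fun i _ => sq_nonneg _)
        rw [hw_sq]
        omega
      have hy'w : y' = w ∘ ⇑(σ'⁻¹) := by
        funext i
        simp [hwdef]
      have hmaj' : ∀ S : Finset (Fin n), ∑ i ∈ S, x i ≤ pref n w S.card := by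
        intro S
        have hcardn : S.card ≤ n := by simpa using Finset.card_le_univ S
        calc ∑ i ∈ S, x i ≤ pref n x S.card := sum_le_pref hx S
          _ ≤ pref n y' S.card := hxy' S.card hcardn
          _ = pref n (w ∘ ⇑(σ'⁻¹)) S.card := by rw [← hy'w]
          _ ≤ pref n w S.card := pref_comp_le hw_anti σ'⁻¹ S.card hcardn
      have hmem := IH w hw_meas hw_anti x hx (by omega) hmaj'
      -- transfer from hull of perms of w to hull of perms of y
      set Y : Fin n → ℝ := fun i => (y i : ℝ) with hY
      set Y' : Fin n → ℝ := fun i => (y' i : ℝ) with hY'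
      set sY := {v : Fin n → ℝ | ∃ σ : Equiv.Perm (Fin n), v = Y ∘ σ} with hsY
      set D : ℝ := (y j : ℝ) - (y k : ℝ) with hD
      have hD0 : 0 < D := by
        rw [hD]
        have : (y k : ℝ) < (y j : ℝ) := by exact_mod_cast hykj
        linarith
      set a : ℝ := (D - (t : ℝ)) / D with ha
      set b : ℝ := (t : ℝ) / D with hb
      have htD : (t : ℝ) ≤ D := by
        have h1 : (t : ℝ) ≤ (y j : ℝ) - (x j : ℝ) := by exact_mod_cast ht2
        have h2 : (x k : ℝ) ≤ (x j : ℝ) := by exact_mod_cast hxkj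
        have h3 : (y k : ℝ) < (x k : ℝ) := by exact_mod_cast hk
        rw [hD]; linarith
      have ha0 : 0 ≤ a := by
        rw [ha]
        apply div_nonneg (by linarith) (le_of_lt hD0)
      have hb0 : 0 ≤ b := by
        rw [hb]
        have : (0 : ℝ) < (t : ℝ) := by exact_mod_cast ht1
        positivity
      have hab : a + b = 1 := by
        rw [ha, hb]
        field_simp
        ring
      have hcombo : Y' = a • Y + b • (Y ∘ ⇑(Equiv.swap j k)) := by
        funext i
        simp only [Pi.add_apply, Pi.smul_apply, smul_eq_mul, Function.comp_apply]
        by_cases h1 : i = j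
        · subst h1
          rw [Equiv.swap_apply_left]
          have hYi : Y' j = (y j : ℝ) - (t : ℝ) := by
            rw [hY']; simp only []; rw [hy'j]; push_cast; ring
          rw [hYi, hY]
          simp only []
          rw [ha, hb, hD]
          have hDne : (y j : ℝ) - (y k : ℝ) ≠ 0 := by
            have := hD0; rw [hD] at this; exact ne_of_gt this
          field_simp
          ring
        · by_cases h2 : i = k
          · subst h2
            rw [Equiv.swap_apply_right]
            have hYi : Y' k = (y k : ℝ) + (t : ℝ) := by
              rw [hY']; simp only []; rw [hy'k]; push_cast; ring
            rw [hYi, hY]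
            simp only []
            rw [ha, hb, hD]
            have hDne : (y j : ℝ) - (y k : ℝ) ≠ 0 := by
              have := hD0; rw [hD] at this; exact ne_of_gt this
            field_simp
            ring
          · rw [Equiv.swap_apply_of_ne_of_ne h1 h2]
            have hYi : Y' i = (y i : ℝ) := by
              rw [hY']; simp only []; rw [hy'other i h1 h2]
            rw [hYi, hY]
            simp only []
            rw [ha, hb]
            field_simp
            ring
      have hY'perm : ∀ σ : Equiv.Perm (Fin n), Y' ∘ ⇑σ ∈ convexHull ℝ sY := by
        intro σ
        have h1 : Y ∘ ⇑σ ∈ sY := ⟨σ, rfl⟩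
        have h2 : Y ∘ ⇑(σ.trans (Equiv.swap j k)) ∈ sY := ⟨σ.trans (Equiv.swap j k), rfl⟩
        have hcomp : Y' ∘ ⇑σ = a • (Y ∘ ⇑σ) + b • (Y ∘ ⇑(σ.trans (Equiv.swap j k))) := by
          funext i
          rw [hcombo]
          simp [Equiv.trans_apply]
        rw [hcomp]
        exact (convex_convexHull ℝ sY) (subset_convexHull ℝ sY h1)
          (subset_convexHull ℝ sY h2) ha0 hb0 hab
      have hsub : {v : Fin n → ℝ | ∃ σ : Equiv.Perm (Fin n), v = (fun i => (w i : ℝ)) ∘ σ}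
          ⊆ convexHull ℝ sY := by
        rintro v ⟨σ, rfl⟩
        have : (fun i => (w i : ℝ)) ∘ ⇑σ = Y' ∘ ⇑(σ.trans σ') := by
          funext i
          simp [hwdef, hY', Equiv.trans_apply]
        rw [this]
        exact hY'perm _
      exact convexHull_min hsub (convex_convexHull ℝ sY) hmem

lemma deltaZ_cast (m n : ℕ) (i : Fin n) : ((deltaZ m n i : ℤ) : ℝ) = deltaVec m n i := by
  rw [deltaZ, deltaVec]
  split_ifs with h
  · simp
  · push_cast; ring

lemma hull_perm {W : Fin n → ℝ} (τ : Equiv.Perm (Fin n)) {v : Fin n → ℝ}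
    (hv : v ∈ convexHull ℝ {u : Fin n → ℝ | ∃ σ : Equiv.Perm (Fin n), u = W ∘ σ}) :
    v ∘ ⇑τ ∈ convexHull ℝ {u : Fin n → ℝ | ∃ σ : Equiv.Perm (Fin n), u = W ∘ σ} := by
  set s := {u : Fin n → ℝ | ∃ σ : Equiv.Perm (Fin n), u = W ∘ σ} with hs
  have hconv : Convex ℝ ((LinearMap.funLeft ℝ ℝ ⇑τ) ⁻¹' (convexHull ℝ s)) :=
    (convex_convexHull ℝ s).linear_preimage _
  have hsub : s ⊆ (LinearMap.funLeft ℝ ℝ ⇑τ) ⁻¹' (convexHull ℝ s) := by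
    rintro u ⟨σ, rfl⟩
    show LinearMap.funLeft ℝ ℝ ⇑τ (W ∘ ⇑σ) ∈ convexHull ℝ s
    have : LinearMap.funLeft ℝ ℝ ⇑τ (W ∘ ⇑σ) = W ∘ ⇑(τ.trans σ) := by
      funext i; rfl
    rw [this]
    exact subset_convexHull ℝ s ⟨τ.trans σ, rfl⟩
  have := convexHull_min hsub hconv hv
  exact this

lemma delta_lower (m n : ℕ) (hm : 1 ≤ m) (hn : 1 ≤ n) (T : Finset (Fin n)) (hT : T.Nonempty) :
    fZ m T.card ≤ ∑ i ∈ T, deltaZ m n i := by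
  have hcard1 : 1 ≤ T.card := Finset.card_pos.2 hT
  have hcardn : T.card ≤ n := by simpa using Finset.card_le_univ T
  have hcompl : ∑ i ∈ T, deltaZ m n i + ∑ i ∈ Tᶜ, deltaZ m n i = ∑ i, deltaZ m n i :=
    Finset.sum_add_sum_compl T _
  have hTc : (Tᶜ).card = n - T.card := by
    rw [Finset.card_compl]; simp
  have h1 : ∑ i ∈ Tᶜ, deltaZ m n i ≤ pref n (deltaZ m n) (n - T.card) := by
    have := sum_le_pref (deltaZ_antitone m hm) Tᶜ
    rwa [hTc] at this
  have h2 := pref_delta_eq (n := n) m hcard1 hcardn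
  have h3 := sum_delta (n := n) m hn
  omega

theorem breakDivisor_iff_mem_permutohedron (m n : ℕ) (hm : 0 < m) (hn : 2 ≤ n)
    (d : Fin n → ℕ) :
    IsBreakDivisor m n d ↔
      (fun i => (d i : ℝ)) ∈
        convexHull ℝ {x : Fin n → ℝ | ∃ σ : Equiv.Perm (Fin n), x = deltaVec m n ∘ σ} := by
  have hn1 : 1 ≤ n := by omega
  have hδv : deltaVec m n = fun i => ((deltaZ m n i : ℤ) : ℝ) :=
    (funext (deltaZ_cast m n)).symm
  have hsetEq : {x : Fin n → ℝ | ∃ σ : Equiv.Perm (Fin n), x = deltaVec m n ∘ σ} =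
      {v : Fin n → ℝ | ∃ σ : Equiv.Perm (Fin n), v = (fun i => ((deltaZ m n i : ℤ) : ℝ)) ∘ σ} := by
    rw [hδv]
  have hgenus : genusZ m n = fZ m n := rfl
  constructor
  · rintro ⟨hsum, hineq⟩
    have hmajd : ∀ S : Finset (Fin n), ∑ i ∈ S, (d i : ℤ) ≤ pref n (deltaZ m n) S.card := by
      intro S
      by_cases hS0 : S = ∅
      · subst hS0
        simp [pref_zero]
      by_cases hS : S = univ
      · subst hS
        have hcard : (univ : Finset (Fin n)).card = n := by simp
        rw [hcard, pref_top, sum_delta m hn1, ← hgenus]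
        exact le_of_eq hsum
      · have hcards : S.card < n := by
          have h1 : S.card ≤ n := by simpa using Finset.card_le_univ S
          have h2 : S.card ≠ n := by
            intro h
            exact hS ((Finset.card_eq_iff_eq_univ S).1 (by simpa using h))
          omega
        have hTc : (Sᶜ).card = n - S.card := by rw [Finset.card_compl]; simp
        have hSc : (Sᶜ).Nonempty := by
          rw [← Finset.card_pos, hTc]; omega
        have hlow := hineq Sᶜ hSc
        have hcompl : ∑ i ∈ S, (d i : ℤ) + ∑ i ∈ Sᶜ, (d i : ℤ) = ∑ i, (d i : ℤ) :=
          Finset.sum_add_sum_compl S _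
        have hp1 : 1 ≤ S.card := by
          have : S.Nonempty := Finset.nonempty_iff_ne_empty.2 hS0
          exact Finset.card_pos.2 this
        have h2 := pref_delta_eq (n := n) m (p := n - S.card) (by omega) (by omega)
        have hnn : n - (n - S.card) = S.card := by omega
        rw [hnn] at h2
        have hfc : (m : ℤ) * (Sᶜ).card * (((Sᶜ).card : ℤ) - 1) / 2 - (Sᶜ).card + 1
            = fZ m (Sᶜ).card := rfl
        rw [hfc, hTc] at hlow
        rw [hgenus] at hsum
        omega
    let σ₀ := Tuple.sort (fun i => -(d i : ℤ))
    have hanti : Antitone (fun i => (d (σ₀ i) : ℤ)) := by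
      intro a b hab
      have h2 : -(d (σ₀ a) : ℤ) ≤ -(d (σ₀ b) : ℤ) :=
        Tuple.monotone_sort (fun i => -(d i : ℤ)) hab
      simp only
      linarith
    have hsum' : ∑ i, (d (σ₀ i) : ℤ) = ∑ i, deltaZ m n i := by
      have e1 : ∑ i, (d (σ₀ i) : ℤ) = ∑ i, (d i : ℤ) :=
        Equiv.sum_comp σ₀ (fun i => (d i : ℤ))
      rw [e1, hsum, hgenus, sum_delta m hn1]
    have hmajx : ∀ S : Finset (Fin n), ∑ i ∈ S, (d (σ₀ i) : ℤ) ≤ pref n (deltaZ m n) S.card := by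
      intro S
      have e : ∑ i ∈ S, (d (σ₀ i) : ℤ) = ∑ i ∈ S.image σ₀, (d i : ℤ) :=
        (Finset.sum_image (f := fun i => (d i : ℤ)) (g := ⇑σ₀) (s := S)
          (fun a _ b _ h => σ₀.injective h)).symm
      rw [e]
      have := hmajd (S.image σ₀)
      rwa [Finset.card_image_of_injective _ σ₀.injective] at this
    have hmem := maj_mem_hull n ((∑ i, (deltaZ m n i)^2).toNat + 1) (deltaZ m n)
      (Nat.lt_succ_self _) (deltaZ_antitone m hm) (fun i => (d (σ₀ i) : ℤ)) hanti hsum' hmajx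
    have hmem' := hull_perm σ₀⁻¹ hmem
    rw [hsetEq]
    have hfe : (fun i => (d i : ℝ)) =
        (fun i => (((fun i => (d (σ₀ i) : ℤ)) i : ℤ) : ℝ)) ∘ ⇑σ₀⁻¹ := by
      funext i
      simp
    rw [hfe]
    exact hmem'
  · intro hmem
    have hgensub : {x : Fin n → ℝ | ∃ σ : Equiv.Perm (Fin n), x = deltaVec m n ∘ σ} ⊆
        {v : Fin n → ℝ | (∑ i, v i = ((fZ m n : ℤ) : ℝ)) ∧
          ∀ S : Finset (Fin n), S.Nonempty → ((fZ m S.card : ℤ) : ℝ) ≤ ∑ i ∈ S, v i} := by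
      rintro x ⟨σ, rfl⟩
      constructor
      · have hz : ∑ i, deltaZ m n (σ i) = fZ m n :=
          (Equiv.sum_comp σ (deltaZ m n)).trans (sum_delta m hn1)
        rw [hδv]
        calc ∑ i, (((deltaZ m n (σ i)) : ℤ) : ℝ)
            = (((∑ i, deltaZ m n (σ i)) : ℤ) : ℝ) := by push_cast; ring
          _ = ((fZ m n : ℤ) : ℝ) := by rw [hz]
      · intro S hS
        rw [hδv]
        have eZ : ∑ i ∈ S.image σ, deltaZ m n i = ∑ i ∈ S, deltaZ m n (σ i) :=
          Finset.sum_image (fun a _ b _ h => σ.injective h)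
        have e : ∑ i ∈ S, (((deltaZ m n (σ i)) : ℤ) : ℝ)
            = (((∑ i ∈ S.image σ, deltaZ m n i) : ℤ) : ℝ) := by
          rw [eZ]; push_cast; ring
        show ((fZ m S.card : ℤ) : ℝ) ≤ ∑ i ∈ S, (((deltaZ m n (σ i)) : ℤ) : ℝ)
        rw [e]
        have hlow := delta_lower m n hm hn1 (S.image σ) (hS.image σ)
        rw [Finset.card_image_of_injective _ σ.injective] at hlow
        exact_mod_cast hlow
    have hCconv : Convex ℝ {v : Fin n → ℝ | (∑ i, v i = ((fZ m n : ℤ) : ℝ)) ∧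
        ∀ S : Finset (Fin n), S.Nonempty → ((fZ m S.card : ℤ) : ℝ) ≤ ∑ i ∈ S, v i} := by
      rintro u ⟨hu1, hu2⟩ v ⟨hv1, hv2⟩ a b ha hb hab
      constructor
      · have e : ∑ i, (a • u + b • v) i = a * ∑ i, u i + b * ∑ i, v i := by
          simp [Finset.sum_add_distrib, Finset.mul_sum]
        rw [e, hu1, hv1]
        have : a * ((fZ m n : ℤ) : ℝ) + b * ((fZ m n : ℤ) : ℝ)
            = (a + b) * ((fZ m n : ℤ) : ℝ) := by ring
        rw [this, hab, one_mul]
      · intro S hS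
        have e : ∑ i ∈ S, (a • u + b • v) i = a * ∑ i ∈ S, u i + b * ∑ i ∈ S, v i := by
          simp [Finset.sum_add_distrib, Finset.mul_sum]
        rw [e]
        have h1 := hu2 S hS
        have h2 := hv2 S hS
        have h3 : a * ((fZ m S.card : ℤ) : ℝ) + b * ((fZ m S.card : ℤ) : ℝ)
            = ((fZ m S.card : ℤ) : ℝ) := by rw [← add_mul, hab, one_mul]
        linarith [mul_le_mul_of_nonneg_left h1 ha, mul_le_mul_of_nonneg_left h2 hb]
    have hdC := convexHull_min hgensub hCconv hmem
    obtain ⟨hd1, hd2⟩ := hdC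
    constructor
    · rw [hgenus]
      exact_mod_cast (show ∑ i, (d i : ℝ) = ((fZ m n : ℤ) : ℝ) from hd1)
    · intro S hS
      have := hd2 S hS
      have hfc : (m : ℤ) * S.card * ((S.card : ℤ) - 1) / 2 - S.card + 1 = fZ m S.card := rfl
      rw [hfc]
      exact_mod_cast (show ((fZ m S.card : ℤ) : ℝ) ≤ ∑ i ∈ S, (d i : ℝ) from this)
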